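/- Let C_1 := sup_{x > 0} (1 − e^{−x})(1 + x)/x (a finite positive number). Then for every integer N ≥ 1 and every real x ≥ 0: (1/N!) (x/(1+x))^N e^x ≤ Σ_{n=N}^∞ x^n/n! ≤ C_1 · N · (x/(1+x))^N e^x. -/

import Mathlib

noncomputable def Etail (N : ℕ) (x : ℝ) : ℝ :=
  Real.exp x - ∑ n ∈ Finset.range N, x ^ n / n.factorial

lemma Etail_eq_tsum (N : ℕ) (x : ℝ) :
    Etail N x = ∑' n : ℕ, x ^ (n + N) / (Nat.factorial (n + N) : ℝ) := by
  have h : Real.exp x = ∑' n : ℕ, x ^ n / n.factorial := by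
    rw [Real.exp_eq_exp_ℝ, NormedSpace.exp_eq_tsum_div]
  have h2 := Summable.sum_add_tsum_nat_add (f := fun n : ℕ => x ^ n / n.factorial) N
    (Real.summable_pow_div_factorial x)
  rw [Etail, h, ← h2]
  ring

lemma Etail_zero {N : ℕ} (hN : 1 ≤ N) : Etail N 0 = 0 := by
  rw [Etail]
  rw [Finset.sum_eq_single 0]
  · simp
  · intro b _ hb
    simp [zero_pow hb]
  · intro h; exact absurd (Finset.mem_range.2 hN) h

lemma hasDerivAt_Etail (N : ℕ) (x : ℝ) : HasDerivAt (Etail (N + 1)) (Etail N x) x := by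
  have hsum : HasDerivAt (fun y : ℝ => ∑ n ∈ Finset.range (N + 1), y ^ n / n.factorial)
      (∑ n ∈ Finset.range N, x ^ n / n.factorial) x := by
    have : HasDerivAt (fun y : ℝ => ∑ n ∈ Finset.range (N + 1), y ^ n / n.factorial)
        (∑ n ∈ Finset.range (N + 1), (n : ℝ) * x ^ (n - 1) / n.factorial) x := by
      apply HasDerivAt.fun_sum
      intro n _
      exact (hasDerivAt_pow n x).div_const _
    convert this using 1
    rw [Finset.sum_range_succ']
    simp only [Nat.cast_zero, Nat.factorial_zero, Nat.cast_one]
    rw [show ((0:ℝ) * x ^ (0-1) / 1) = 0 by simp]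
    rw [add_zero]
    apply Finset.sum_congr rfl
    intro i _
    have : ((i:ℝ) + 1) ≠ 0 := by positivity
    field_simp [Nat.factorial_succ]
    rw [Nat.add_sub_cancel, Nat.factorial_succ]; push_cast; ring
  exact (Real.hasDerivAt_exp x).sub hsum

lemma hasDerivAt_F (N : ℕ) (x : ℝ) (hx : 0 ≤ x) :
    HasDerivAt (fun y : ℝ => (y / (1 + y)) ^ (N + 1) * Real.exp y)
      (((x / (1 + x)) ^ (N + 1) + ((N : ℝ) + 1) * (x / (1 + x)) ^ N * (1 - x / (1 + x)) ^ 2)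
        * Real.exp x) x := by
  have hx1 : (1 : ℝ) + x ≠ 0 := by positivity
  have hdiv : HasDerivAt (fun y : ℝ => y / (1 + y)) (1 / (1 + x) ^ 2) x := by
    have := (hasDerivAt_id x).div ((hasDerivAt_id x).const_add 1) hx1
    convert this using 1
    · rfl
    · rfl
    · rfl
    simp only [id]; ring
  have hpow := hdiv.pow (N + 1)
  have := hpow.mul (Real.hasDerivAt_exp x)
  convert this using 1
  · rfl
  · rfl
  · rfl
  have h1u : 1 - x / (1 + x) = 1 / (1 + x) := by field_simp; ring
  rw [h1u]
  simp only [Nat.cast_add, Nat.cast_one, Nat.add_sub_cancel, Pi.pow_apply]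
  field_simp
  ring

lemma nonneg_of_deriv {G G' : ℝ → ℝ} (hG : ∀ x, 0 ≤ x → HasDerivAt G (G' x) x)
    (h0 : G 0 = 0) (hG' : ∀ x, 0 ≤ x → 0 ≤ G' x) : ∀ x, 0 ≤ x → 0 ≤ G x := by
  have hmono : MonotoneOn G (Set.Ici (0 : ℝ)) := by
    apply monotoneOn_of_deriv_nonneg (convex_Ici 0)
    · exact fun y hy => (hG y hy).continuousAt.continuousWithinAt
    · intro y hy
      rw [interior_Ici] at hy
      exact (hG y hy.le).differentiableAt.differentiableWithinAt
    · intro y hy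
      rw [interior_Ici] at hy
      rw [(hG y hy.le).deriv]
      exact hG' y hy.le
  intro x hx
  have := hmono (Set.self_mem_Ici) (Set.mem_Ici.2 hx) hx
  rwa [h0] at this

noncomputable def c1 : ℝ :=
  sSup ((fun x : ℝ => (1 - Real.exp (-x)) * (1 + x) / x) '' Set.Ioi 0)

lemma bdd_c1 : BddAbove ((fun x : ℝ => (1 - Real.exp (-x)) * (1 + x) / x) '' Set.Ioi 0) := by
  refine ⟨2, ?_⟩
  rintro y ⟨x, hx, rfl⟩
  simp only [Set.mem_Ioi] at hx
  rw [div_le_iff₀ hx]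
  have hE := Real.add_one_le_exp (-x)
  have hEp := (Real.exp_pos (-x)).le
  nlinarith [mul_nonneg hx.le hEp]

lemma c1_nonneg : 0 ≤ c1 := by
  have h1 : (1 - Real.exp (-1)) * (1 + 1) / 1 ≤ c1 :=
    le_csSup bdd_c1 ⟨1, by norm_num, rfl⟩
  have : Real.exp (-1) ≤ 1 := Real.exp_le_one_iff.2 (by norm_num)
  nlinarith

lemma lower_bound (N : ℕ) : ∀ x : ℝ, 0 ≤ x →
    (x / (1 + x)) ^ N * Real.exp x / N.factorial ≤ Etail N x := by
  induction N with
  | zero => intro x hx; simp [Etail]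
  | succ N ih =>
    have key : ∀ x : ℝ, 0 ≤ x →
        0 ≤ Etail (N + 1) x - (x / (1 + x)) ^ (N + 1) * Real.exp x / (N + 1).factorial := by
      apply nonneg_of_deriv (G' := fun y => Etail N y -
        (((y / (1 + y)) ^ (N + 1) + ((N : ℝ) + 1) * (y / (1 + y)) ^ N * (1 - y / (1 + y)) ^ 2)
          * Real.exp y) / (N + 1).factorial)
      · intro y hy
        exact (hasDerivAt_Etail N y).sub ((hasDerivAt_F N y hy).div_const _)
      · rw [Etail_zero (by omega)]
        norm_num
      · intro y hy
        have ihy := ih y hy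
        set u := y / (1 + y) with hu_def
        have hu : 0 ≤ u := div_nonneg hy (by positivity)
        have hu1 : u ≤ 1 := by
          rw [hu_def, div_le_one (by positivity)]; linarith
        have hE := (Real.exp_pos y).le
        have hfac : ((N + 1).factorial : ℝ) = ((N : ℝ) + 1) * N.factorial := by
          rw [Nat.factorial_succ]; push_cast; ring
        have hfacpos : (0:ℝ) < N.factorial := by positivity
        rw [hfac]
        have hkey : (u ^ (N + 1) + ((N : ℝ) + 1) * u ^ N * (1 - u) ^ 2)
            ≤ ((N : ℝ) + 1) * u ^ N := by
          have hps : u ^ (N + 1) = u ^ N * u := pow_succ u N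
          have hP : (0:ℝ) ≤ u ^ N := pow_nonneg hu N
          have hPu : (0:ℝ) ≤ u ^ N * u := mul_nonneg hP hu
          have hPu1 : (0:ℝ) ≤ u ^ N * u * (1 - u) := mul_nonneg hPu (by linarith)
          have hNn : (0:ℝ) ≤ (N : ℝ) := Nat.cast_nonneg N
          nlinarith [mul_nonneg hNn hPu, mul_nonneg hNn hPu1]
        have hstep : ((u ^ (N + 1) + ((N : ℝ) + 1) * u ^ N * (1 - u) ^ 2) * Real.exp y)
            / (((N : ℝ) + 1) * N.factorial) ≤ u ^ N * Real.exp y / N.factorial := by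
          rw [div_le_div_iff₀ (by positivity) hfacpos]
          have := mul_le_mul_of_nonneg_right hkey hE
          nlinarith [this, hfacpos]
        linarith
    intro x hx
    have := key x hx
    linarith

lemma upper_bound (N : ℕ) (hN : 1 ≤ N) : ∀ x : ℝ, 0 ≤ x →
    Etail N x ≤ c1 * N * ((x / (1 + x)) ^ N * Real.exp x) := by
  induction N, hN using Nat.le_induction with
  | base =>
    intro x hx
    rcases eq_or_lt_of_le hx with h | hxpos
    · rw [← h, Etail_zero le_rfl]
      norm_num
    have hC : (1 - Real.exp (-x)) * (1 + x) / x ≤ c1 :=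
      le_csSup bdd_c1 ⟨x, hxpos, rfl⟩
    have hxne : x ≠ 0 := ne_of_gt hxpos
    have h1x : (0:ℝ) < 1 + x := by linarith
    have hEt : Etail 1 x = Real.exp x - 1 := by simp [Etail]
    have heq : ((1 - Real.exp (-x)) * (1 + x) / x) * ((x / (1 + x)) * Real.exp x)
        = Real.exp x - 1 := by
      rw [Real.exp_neg]
      have hEne := Real.exp_ne_zero x
      field_simp
    have hpos : (0:ℝ) ≤ (x / (1 + x)) * Real.exp x := by positivity
    have := mul_le_mul_of_nonneg_right hC hpos
    rw [heq] at this
    rw [hEt]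
    push_cast [pow_one]
    linarith
  | succ N hN ih =>
    have key : ∀ x : ℝ, 0 ≤ x →
        0 ≤ c1 * ((N : ℝ) + 1) * ((x / (1 + x)) ^ (N + 1) * Real.exp x) - Etail (N + 1) x := by
      apply nonneg_of_deriv (G' := fun y => c1 * ((N : ℝ) + 1) *
        (((y / (1 + y)) ^ (N + 1) + ((N : ℝ) + 1) * (y / (1 + y)) ^ N * (1 - y / (1 + y)) ^ 2)
          * Real.exp y) - Etail N y)
      · intro y hy
        exact (HasDerivAt.const_mul _ (hasDerivAt_F N y hy)).sub (hasDerivAt_Etail N y)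
      · rw [Etail_zero (by omega)]
        norm_num
      · intro y hy
        have ihy := ih y hy
        set u := y / (1 + y) with hu_def
        have hu : 0 ≤ u := div_nonneg hy (by positivity)
        have hu1 : u ≤ 1 := by
          rw [hu_def, div_le_one (by positivity)]; linarith
        have hE := (Real.exp_pos y).le
        have hkey : (N : ℝ) * u ^ N
            ≤ ((N : ℝ) + 1) * (u ^ (N + 1) + ((N : ℝ) + 1) * u ^ N * (1 - u) ^ 2) := by
          have hps : u ^ (N + 1) = u ^ N * u := pow_succ u N
          have hP : (0:ℝ) ≤ u ^ N := pow_nonneg hu N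
          nlinarith [mul_nonneg hP (sq_nonneg (((N : ℝ) + 1) * (1 - u) - 1)),
            mul_nonneg hP (sub_nonneg.2 hu1),
            mul_nonneg (mul_nonneg hP (sub_nonneg.2 hu1)) (Nat.cast_nonneg N : (0:ℝ) ≤ N)]
        have hmul := mul_le_mul_of_nonneg_right
          (mul_le_mul_of_nonneg_left hkey c1_nonneg) hE
        have : Etail N y ≤ c1 * (N : ℝ) * (u ^ N * Real.exp y) := ihy
        nlinarith [this, hmul]
    intro x hx
    have := key x hx
    push_cast
    linarith

theorem exponential_tail_estimate :
    let C₁ : ℝ := sSup ((fun x : ℝ => (1 - Real.exp (-x)) * (1 + x) / x) '' Set.Ioi 0)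
    ∀ N : ℕ, 1 ≤ N → ∀ x : ℝ, 0 ≤ x →
      (1 / (Nat.factorial N : ℝ)) * (x / (1 + x)) ^ N * Real.exp x ≤
        ∑' n : ℕ, x ^ (n + N) / (Nat.factorial (n + N) : ℝ) ∧
      ∑' n : ℕ, x ^ (n + N) / (Nat.factorial (n + N) : ℝ) ≤
        C₁ * N * (x / (1 + x)) ^ N * Real.exp x := by
  intro C₁ N hN x hx
  have hC : C₁ = c1 := rfl
  rw [← Etail_eq_tsum]
  constructor
  · have h := lower_bound N x hx
    calc (1 / (Nat.factorial N : ℝ)) * (x / (1 + x)) ^ N * Real.exp x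
        = (x / (1 + x)) ^ N * Real.exp x / N.factorial := by ring
      _ ≤ Etail N x := h
  · have h := upper_bound N hN x hx
    rw [hC]
    calc Etail N x ≤ c1 * N * ((x / (1 + x)) ^ N * Real.exp x) := h
      _ = c1 * N * (x / (1 + x)) ^ N * Real.exp x := by ring
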